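/- arXiv:0811.2090 — 4 statements merged into one kernel-verified Lean document; each statement's English description precedes it below -/
import Mathlib

section
/- The split interval, i.e. the set [0,1] × {0,1} equipped with the lexicographic order ((s,i) < (t,j) iff s < t, or s = t and i < j) and its order topology, is a compact linearly ordered space that is not fragmentable. -/
open Set

/-- `d` is a metric on `K` (as a function, not necessarily related to the topology). -/
def IsMetricOn {K : Type} (d : K → K → ℝ) : Prop :=
  (∀ x y : K, 0 ≤ d x y) ∧ (∀ x : K, d x x = 0) ∧
  (∀ x y : K, d x y = 0 → x = y) ∧ (∀ x y : K, d x y = d y x) ∧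
  (∀ x y z : K, d x z ≤ d x y + d y z)

/-- `d` fragments `K`: every nonempty subset has relatively open nonempty pieces of
arbitrarily small `d`-diameter. -/
def Fragments {K : Type} [TopologicalSpace K] (d : K → K → ℝ) : Prop :=
  ∀ M : Set K, M.Nonempty → ∀ ε : ℝ, 0 < ε →
    ∃ U : Set K, IsOpen U ∧ (M ∩ U).Nonempty ∧
      ∀ x ∈ M ∩ U, ∀ y ∈ M ∩ U, d x y < ε

/-- A topological space is fragmentable if some metric fragments it. -/
def Fragmentable (K : Type) [TopologicalSpace K] : Prop :=
  ∃ d : K → K → ℝ, IsMetricOn d ∧ Fragments d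

/-- A compact space is Radon–Nikodým compact if some lower semicontinuous metric
fragments it. -/
def RNCompact (K : Type) [TopologicalSpace K] : Prop :=
  ∃ d : K → K → ℝ, IsMetricOn d ∧
    LowerSemicontinuous (fun p : K × K => d p.1 p.2) ∧ Fragments d

/-- A set is scattered if every nonempty subset of it has a relatively isolated point. -/
def IsScatteredSet {K : Type} [TopologicalSpace K] (s : Set K) : Prop :=
  ∀ t : Set K, t ⊆ s → t.Nonempty → ∃ x ∈ t, ∃ U : Set K, IsOpen U ∧ t ∩ U = {x}

/-- The split interval `[0,1] × {0,1}` with the lexicographic order. -/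
abbrev SplitInterval : Type := ↥(Set.Icc (0 : ℝ) 1) ×ₗ Bool

/-- The split interval carries its order topology. -/
instance : TopologicalSpace SplitInterval := Preorder.topology SplitInterval

instance : OrderTopology SplitInterval := ⟨rfl⟩

instance : Fact ((0:ℝ) ≤ 1) := ⟨zero_le_one⟩

noncomputable instance SplitInterval.instSupSet : SupSet SplitInterval :=
  ⟨fun S =>
    letI T := sSup ((fun x => (ofLex x).1) '' S)
    toLex (T, @ite _ (toLex (T, true) ∈ S) (Classical.propDecidable _) true false)⟩

theorem SplitInterval.isLUB_sSup (S : Set SplitInterval) : IsLUB S (sSup S) := by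
  set T := sSup ((fun x : SplitInterval => (ofLex x).1) '' S) with hT
  constructor
  · intro x hx
    have h1 : (ofLex x).1 ≤ T := le_sSup ⟨x, hx, rfl⟩
    show toLex (ofLex x) ≤ toLex (T, _)
    rw [Prod.Lex.le_iff]
    rcases lt_or_eq_of_le h1 with h | h
    · exact Or.inl h
    · refine Or.inr ⟨h, ?_⟩
      by_cases hmem : toLex (T, true) ∈ S
      · rw [if_pos hmem]; exact Bool.le_true _
      · rw [if_neg hmem]
        rcases Bool.eq_false_or_eq_true (ofLex x).2 with h2 | h2
        · exfalso
          apply hmem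
          have hxe : ofLex x = (T, true) := Prod.ext h h2
          have : x = toLex (T, true) := by rw [show x = toLex (ofLex x) from rfl, hxe]
          rwa [← this]
        · exact le_of_eq h2
  · intro u hu
    have hTu : T ≤ (ofLex u).1 := by
      apply sSup_le
      rintro a ⟨x, hxS, rfl⟩
      have := hu hxS
      rw [show x = toLex (ofLex x) from rfl, show u = toLex (ofLex u) from rfl,
        Prod.Lex.le_iff] at this
      rcases this with h | ⟨h, _⟩
      · exact le_of_lt h
      · exact le_of_eq h
    show toLex (T, _) ≤ toLex (ofLex u)
    rw [Prod.Lex.le_iff]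
    rcases lt_or_eq_of_le hTu with h | h
    · exact Or.inl h
    · refine Or.inr ⟨h, ?_⟩
      by_cases hmem : toLex (T, true) ∈ S
      · rw [if_pos hmem]
        have := hu hmem
        rw [show u = toLex (ofLex u) from rfl, Prod.Lex.le_iff] at this
        rcases this with h' | ⟨_, h'⟩
        · exact absurd h (ne_of_lt h')
        · exact h'
      · rw [if_neg hmem]; exact Bool.false_le _

noncomputable instance : CompleteLinearOrder SplitInterval :=
  { LinearOrder.toBiheytingAlgebra _, (inferInstance : LinearOrder SplitInterval),
    completeLatticeOfSup _ SplitInterval.isLUB_sSup with }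


open Filter Topology
lemma countable_of_initial_countable (S : Set ℝ) (hb : BddAbove S)
    (h : ∀ t ∈ S, (S ∩ Iio t).Countable) : S.Countable := by
  rcases S.eq_empty_or_nonempty with rfl | hne
  · exact countable_empty
  obtain ⟨u, -, htend, hmem⟩ := exists_seq_tendsto_sSup hne hb
  have hsub : S ⊆ {sSup S} ∪ ⋃ n, S ∩ Iio (u n) := by
    intro t ht
    rcases lt_or_eq_of_le (le_csSup hb ht) with hlt | heq
    · obtain ⟨n, hn⟩ := (htend.eventually (eventually_gt_nhds hlt)).exists
      exact Or.inr (mem_iUnion.2 ⟨n, ht, hn⟩)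
    · exact Or.inl heq
  exact Countable.mono hsub
    ((countable_singleton _).union (countable_iUnion fun n => h (u n) (hmem n)))

lemma countable_of_final_countable (S : Set ℝ) (hb : BddBelow S)
    (h : ∀ t ∈ S, (S ∩ Ioi t).Countable) : S.Countable := by
  rcases S.eq_empty_or_nonempty with rfl | hne
  · exact countable_empty
  obtain ⟨u, -, htend, hmem⟩ := exists_seq_tendsto_sInf hne hb
  have hsub : S ⊆ {sInf S} ∪ ⋃ n, S ∩ Ioi (u n) := by
    intro t ht
    rcases lt_or_eq_of_le (csInf_le hb ht) with hlt | heq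
    · obtain ⟨n, hn⟩ := (htend.eventually (eventually_lt_nhds hlt)).exists
      exact Or.inr (mem_iUnion.2 ⟨n, ht, hn⟩)
    · exact Or.inl heq.symm
  exact Countable.mono hsub
    ((countable_singleton _).union (countable_iUnion fun n => h (u n) (hmem n)))

/-- From an uncountable subset of `[0,1]` extract a nonempty "two-sided condensation"
subset: every point is accumulated from both sides within the set. -/
lemma exists_twosided_set (B : Set ℝ) (hB : B ⊆ Icc 0 1) (hunc : ¬ B.Countable) :
    ∃ A : Set ℝ, A ⊆ B ∧ A.Nonempty ∧
      (∀ t ∈ A, ∀ s < t, (Ioo s t ∩ A).Nonempty) ∧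
      (∀ t ∈ A, ∀ s, t < s → (Ioo t s ∩ A).Nonempty) := by
  set L : Set ℝ := {t | t ∈ B ∧ ∃ s < t, (Ioo s t ∩ B).Countable} with hL
  set R : Set ℝ := {t | t ∈ B ∧ ∃ s, t < s ∧ (Ioo t s ∩ B).Countable} with hR
  have hLc : L.Countable := by
    have hsub : L ⊆ ⋃ q : ℚ, {t | t ∈ B ∧ (q : ℝ) < t ∧ (Ioo (q : ℝ) t ∩ B).Countable} := by
      rintro t ⟨htB, s, hst, hc⟩
      obtain ⟨q, hq1, hq2⟩ := exists_rat_btwn hst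
      exact mem_iUnion.2 ⟨q, htB, hq2,
        hc.mono (inter_subset_inter_left _ (Ioo_subset_Ioo hq1.le le_rfl))⟩
    refine Countable.mono hsub (countable_iUnion fun q => ?_)
    refine countable_of_initial_countable _ ⟨1, fun x hx => (hB hx.1).2⟩ ?_
    rintro t ⟨-, -, hc⟩
    refine hc.mono ?_
    rintro x ⟨⟨hxB, hxq, -⟩, hxt⟩
    exact ⟨⟨hxq, hxt⟩, hxB⟩
  have hRc : R.Countable := by
    have hsub : R ⊆ ⋃ q : ℚ, {t | t ∈ B ∧ t < (q : ℝ) ∧ (Ioo t (q : ℝ) ∩ B).Countable} := by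
      rintro t ⟨htB, s, hst, hc⟩
      obtain ⟨q, hq1, hq2⟩ := exists_rat_btwn hst
      exact mem_iUnion.2 ⟨q, htB, hq1,
        hc.mono (inter_subset_inter_left _ (Ioo_subset_Ioo le_rfl hq2.le))⟩
    refine Countable.mono hsub (countable_iUnion fun q => ?_)
    refine countable_of_final_countable _ ⟨0, fun x hx => (hB hx.1).1⟩ ?_
    rintro t ⟨-, -, hc⟩
    refine hc.mono ?_
    rintro x ⟨⟨hxB, hxq, -⟩, hxt⟩
    exact ⟨⟨hxt, hxq⟩, hxB⟩
  refine ⟨B \ (L ∪ R), diff_subset, ?_, ?_, ?_⟩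
  · rcases (B \ (L ∪ R)).eq_empty_or_nonempty with he | hne
    · exfalso
      apply hunc
      have : B ⊆ L ∪ R := by
        intro t ht
        by_contra h
        exact (he ▸ (⟨ht, h⟩ : t ∈ B \ (L ∪ R)) : t ∈ (∅ : Set ℝ))
      exact Countable.mono this (hLc.union hRc)
    · exact hne
  · rintro t ⟨htB, htLR⟩ s hst
    by_contra hemp
    apply htLR
    left
    refine ⟨htB, s, hst, ?_⟩
    have : Ioo s t ∩ B ⊆ L ∪ R := by
      rintro x ⟨hx1, hx2⟩
      by_contra h
      exact hemp ⟨x, hx1, hx2, h⟩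
    exact Countable.mono this (hLc.union hRc)
  · rintro t ⟨htB, htLR⟩ s hst
    by_contra hemp
    apply htLR
    right
    refine ⟨htB, s, hst, ?_⟩
    have : Ioo t s ∩ B ⊆ L ∪ R := by
      rintro x ⟨hx1, hx2⟩
      by_contra h
      exact hemp ⟨x, hx1, hx2, h⟩
    exact Countable.mono this (hLc.union hRc)

/-- The split interval, with the lexicographic order and its order topology, is a compact
linearly ordered space that is not fragmentable. -/
theorem stmt_6 : CompactSpace SplitInterval ∧ ¬ Fragmentable SplitInterval := by
  refine ⟨inferInstance, ?_⟩
  rintro ⟨d, ⟨hd0, -, hdne, -, -⟩, hfrag⟩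
  set I := ↥(Set.Icc (0 : ℝ) 1)
  have hDpos : ∀ t : I, 0 < d (toLex (t, false)) (toLex (t, true)) := by
    intro t
    rcases lt_or_eq_of_le (hd0 (toLex (t, false)) (toLex (t, true))) with h | h
    · exact h
    · exfalso
      have h2 := congrArg (fun x : SplitInterval => (ofLex x).2) (hdne _ _ h.symm)
      simp at h2
  set Bn : ℕ → Set I := fun n =>
    {t | 1 / (n + 1 : ℝ) ≤ d (toLex (t, false)) (toLex (t, true))} with hBn
  have huncI : ¬ (univ : Set I).Countable := by
    intro h
    have hc : (Set.Icc (0:ℝ) 1).Countable := by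
      rw [← Set.countable_coe_iff]
      exact (Set.countable_univ_iff).1 h
    have := hc.le_aleph0
    rw [Cardinal.mk_Icc_real zero_lt_one] at this
    exact absurd this (not_le.2 Cardinal.aleph0_lt_continuum)
  have hcover : (univ : Set I) ⊆ ⋃ n, Bn n := by
    intro t _
    obtain ⟨n, hn⟩ := exists_nat_one_div_lt (hDpos t)
    exact mem_iUnion.2 ⟨n, hn.le⟩
  obtain ⟨n, hn⟩ : ∃ n, ¬ (Bn n).Countable := by
    by_contra h
    push_neg at h
    exact huncI (Countable.mono hcover (countable_iUnion h))
  set B : Set ℝ := Subtype.val '' (Bn n) with hB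
  have hBunc : ¬ B.Countable := fun h =>
    hn ((h.preimage Subtype.val_injective).mono (subset_preimage_image _ _))
  have hBsub : B ⊆ Icc 0 1 := by rintro x ⟨t, -, rfl⟩; exact t.2
  obtain ⟨A, hAB, ⟨t₀, ht₀⟩, hleft, hright⟩ := exists_twosided_set B hBsub hBunc
  set M : Set SplitInterval := {x | ((ofLex x).1 : ℝ) ∈ A} with hM
  have hMne : M.Nonempty := ⟨toLex (⟨t₀, hBsub (hAB ht₀)⟩, false), ht₀⟩
  have hε : (0:ℝ) < 1 / (n + 1 : ℝ) := by positivity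
  obtain ⟨U, hU, ⟨x, hxM, hxU⟩, hdiam⟩ := hfrag M hMne _ hε
  have key : ∀ u : ℝ, u ∈ A → ∀ hu : u ∈ Set.Icc (0:ℝ) 1,
      toLex ((⟨u, hu⟩ : I), false) ∈ U → toLex ((⟨u, hu⟩ : I), true) ∈ U → False := by
    intro u huA hu h0 h1
    have hm0 : toLex ((⟨u, hu⟩ : I), false) ∈ M := huA
    have hm1 : toLex ((⟨u, hu⟩ : I), true) ∈ M := huA
    have hlt := hdiam _ ⟨hm0, h0⟩ _ ⟨hm1, h1⟩
    obtain ⟨t', ht', htv⟩ := hAB huA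
    have he : t' = ⟨u, hu⟩ := Subtype.ext htv
    rw [he] at ht'
    exact absurd hlt (not_lt.2 ht')
  set t : I := (ofLex x).1 with htdef
  have hxA : (t : ℝ) ∈ A := hxM
  have htI : (t : ℝ) ∈ Set.Icc (0:ℝ) 1 := t.2
  rcases Bool.eq_false_or_eq_true (ofLex x).2 with hi | hi
  -- case (ofLex x).2 = true
  · have hxe : x = toLex (t, true) := by
      rw [show x = toLex (ofLex x) from rfl]
      exact congrArg toLex (Prod.ext rfl hi)
    have habove : ∃ u', x < u' := by
      obtain ⟨s, hs, hsA⟩ := hright _ hxA ((t : ℝ) + 1) (by linarith)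
      have hsI := hBsub (hAB hsA)
      refine ⟨toLex ((⟨s, hsI⟩ : I), false), ?_⟩
      rw [hxe]
      exact Prod.Lex.lt_iff.2 (Or.inl (Subtype.mk_lt_mk.2 hs.1))
    obtain ⟨u', hu', hsub⟩ := exists_Ico_subset_of_mem_nhds (hU.mem_nhds hxU) habove
    have hu1 : t < (ofLex u').1 := by
      rw [show u' = toLex (ofLex u') from rfl, hxe, Prod.Lex.lt_iff] at hu'
      rcases hu' with h | ⟨h, h2⟩
      · exact h
      · exact absurd h2 (by simp)
    obtain ⟨w, hw, hwA⟩ := hright _ hxA ((ofLex u').1 : ℝ) (Subtype.coe_lt_coe.2 hu1)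
    have hwI := hBsub (hAB hwA)
    have hw1 : t < (⟨w, hwI⟩ : I) := Subtype.mk_lt_mk.2 hw.1
    have hw2 : (⟨w, hwI⟩ : I) < (ofLex u').1 := Subtype.mk_lt_mk.2 hw.2
    have h0 : toLex ((⟨w, hwI⟩ : I), false) ∈ U := by
      apply hsub
      constructor
      · rw [hxe]; exact le_of_lt (Prod.Lex.lt_iff.2 (Or.inl hw1))
      · rw [show u' = toLex (ofLex u') from rfl]
        exact Prod.Lex.lt_iff.2 (Or.inl hw2)
    have h1 : toLex ((⟨w, hwI⟩ : I), true) ∈ U := by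
      apply hsub
      constructor
      · rw [hxe]; exact le_of_lt (Prod.Lex.lt_iff.2 (Or.inl hw1))
      · rw [show u' = toLex (ofLex u') from rfl]
        exact Prod.Lex.lt_iff.2 (Or.inl hw2)
    exact key w hwA hwI h0 h1
  -- case (ofLex x).2 = false
  · have hxe : x = toLex (t, false) := by
      rw [show x = toLex (ofLex x) from rfl]
      exact congrArg toLex (Prod.ext rfl hi)
    have hbelow : ∃ l, l < x := by
      obtain ⟨s, hs, hsA⟩ := hleft _ hxA ((t : ℝ) - 1) (by linarith)
      have hsI := hBsub (hAB hsA)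
      refine ⟨toLex ((⟨s, hsI⟩ : I), true), ?_⟩
      rw [hxe]
      exact Prod.Lex.lt_iff.2 (Or.inl (Subtype.mk_lt_mk.2 hs.2))
    obtain ⟨l, hl, hsub⟩ := exists_Ioc_subset_of_mem_nhds (hU.mem_nhds hxU) hbelow
    have hl1 : (ofLex l).1 < t := by
      rw [show l = toLex (ofLex l) from rfl, hxe, Prod.Lex.lt_iff] at hl
      rcases hl with h | ⟨h, h2⟩
      · exact h
      · exact absurd h2 (by simp)
    obtain ⟨w, hw, hwA⟩ := hleft _ hxA (((ofLex l).1 : I) : ℝ) (Subtype.coe_lt_coe.2 hl1)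
    have hwI := hBsub (hAB hwA)
    have hw1 : (ofLex l).1 < (⟨w, hwI⟩ : I) := Subtype.mk_lt_mk.2 hw.1
    have hw2 : (⟨w, hwI⟩ : I) < t := Subtype.mk_lt_mk.2 hw.2
    have h0 : toLex ((⟨w, hwI⟩ : I), false) ∈ U := by
      apply hsub
      constructor
      · rw [show l = toLex (ofLex l) from rfl]
        exact Prod.Lex.lt_iff.2 (Or.inl hw1)
      · rw [hxe]; exact le_of_lt (Prod.Lex.lt_iff.2 (Or.inl hw2))
    have h1 : toLex ((⟨w, hwI⟩ : I), true) ∈ U := by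
      apply hsub
      constructor
      · rw [show l = toLex (ofLex l) from rfl]
        exact Prod.Lex.lt_iff.2 (Or.inl hw1)
      · rw [hxe]; exact le_of_lt (Prod.Lex.lt_iff.2 (Or.inl hw2))
    exact key w hwA hwI h0 h1
end

section
/- Let T be a tree, α a limit ordinal of cofinality κ, and H ⊆ T_α. Let (α_ξ)_{ξ<κ} and (α'_ξ)_{ξ<κ} be two cofinal sequences in α. If there exists an injective, regressive map π : H → ⋃_{ξ<κ} T_{α_ξ}, then there exists an injective, regressive map π' : H → ⋃_{ξ<κ} T_{α'_ξ}. -/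
open Set

/-- A partial order is a tree order if the set of strict predecessors of
each element is well-ordered. -/
def IsTreeOrder (T : Type) [PartialOrder T] : Prop :=
  ∀ x : T, IsWellOrder {y : T // y < x} (fun a b => (a : T) < (b : T))

/-- The height of an element of a tree: the order type of its set of strict
predecessors. -/
noncomputable def treeHt {T : Type} [PartialOrder T] (hT : IsTreeOrder T) (x : T) : Ordinal :=
  @Ordinal.type {y : T // y < x} (fun a b => (a : T) < (b : T)) (hT x)

/-- The level of a tree of order `α`. -/
def treeLevel {T : Type} [PartialOrder T] (hT : IsTreeOrder T) (α : Ordinal) : Set T :=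
  {x : T | treeHt hT x = α}

/-- `f` is a cofinal sequence in the limit ordinal `α`: it is a strictly increasing
`cf α`-indexed sequence of ordinals below `α` whose supremum is `α`. -/
def IsCofinalSeq (α : Ordinal) (f : Ordinal → Ordinal) : Prop :=
  (∀ ξ η : Ordinal, ξ < η → η < α.cof.ord → f ξ < f η) ∧
  (∀ ξ : Ordinal, ξ < α.cof.ord → f ξ < α) ∧
  (∀ β : Ordinal, β < α → ∃ ξ : Ordinal, ξ < α.cof.ord ∧ β ≤ f ξ)

/-- A subset `H` of the level `T_α` (`α` a limit ordinal) is simple if for some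
cofinal sequence `(α_ξ)_{ξ < cf α}` in `α` there is an injective regressive map
from `H` into `⋃_{ξ < cf α} T_{α_ξ}`. -/
def TreeSimple {T : Type} [PartialOrder T] (hT : IsTreeOrder T) (α : Ordinal)
    (H : Set T) : Prop :=
  ∃ f : Ordinal → Ordinal, IsCofinalSeq α f ∧
    ∃ π : T → T, Set.InjOn π H ∧
      ∀ x ∈ H, π x < x ∧ ∃ ξ : Ordinal, ξ < α.cof.ord ∧ treeHt hT (π x) = f ξ

/-- A tree is Hausdorff if every nonempty totally ordered subset has at most one
minimal upper bound. -/
def IsHausdorffTree (T : Type) [PartialOrder T] : Prop :=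
  ∀ A : Set T, A.Nonempty → IsChain (· ≤ ·) A → ∀ u v : T,
    u ∈ upperBounds A → (∀ w ∈ upperBounds A, ¬ w < u) →
    v ∈ upperBounds A → (∀ w ∈ upperBounds A, ¬ w < v) → u = v

/-- The interval topology on a tree, generated by the sets `(x, z]` and `(0, z]`. -/
def intervalTopology (T : Type) [PartialOrder T] : TopologicalSpace T :=
  TopologicalSpace.generateFrom
    ({s : Set T | ∃ x z : T, s = Set.Ioc x z} ∪ {s : Set T | ∃ z : T, s = Set.Iic z})

lemma treeHt_eq_typein {T : Type} [PartialOrder T] (hT : IsTreeOrder T) {x y : T} (h : y < x) :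
    treeHt hT y = @Ordinal.typein {z : T // z < x} (fun a b => (a : T) < (b : T)) (hT x) ⟨y, h⟩ := by
  have := hT x
  rw [← @Ordinal.type_subrel {z : T // z < x} (fun a b => (a : T) < (b : T)) (hT x) ⟨y, h⟩]
  refine (@Ordinal.type_eq _ _ _ _ (hT y) _).2 ⟨?_⟩
  exact ⟨⟨fun z => ⟨⟨z.1, z.2.trans h⟩, z.2⟩, fun b => ⟨b.1.1, b.2⟩,
    fun z => rfl, fun b => rfl⟩, Iff.rfl⟩

/-- Strict predecessors at the same height agree even below comparable nodes. -/
lemma treeHt_lt_of_lt {T : Type} [PartialOrder T] (hT : IsTreeOrder T) {x y : T} (h : y < x) :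
    treeHt hT y < treeHt hT x := by
  have := hT x
  rw [treeHt_eq_typein hT h]
  exact Ordinal.typein_lt_type _ _

lemma treeHt_inj_below {T : Type} [PartialOrder T] (hT : IsTreeOrder T) {x u v : T}
    (hu : u ≤ x) (hv : v ≤ x) (h : treeHt hT u = treeHt hT v) : u = v := by
  have := hT x
  rcases hu.lt_or_eq with hu' | rfl
  · rcases hv.lt_or_eq with hv' | rfl
    · rw [treeHt_eq_typein hT hu', treeHt_eq_typein hT hv'] at h
      exact congrArg Subtype.val (Ordinal.typein_injective _ h : (⟨u, hu'⟩ : {z : T // z < x}) = ⟨v, hv'⟩)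
    · exact absurd h (treeHt_lt_of_lt hT hu').ne
  · rcases hv.lt_or_eq with hv' | rfl
    · exact absurd h.symm (treeHt_lt_of_lt hT hv').ne
    · rfl

lemma treeHt_le_of_le {T : Type} [PartialOrder T] (hT : IsTreeOrder T) {x u v : T}
    (hu : u < x) (hv : v < x) (h : treeHt hT u ≤ treeHt hT v) : u ≤ v := by
  have := hT x
  rcases trichotomous_of (fun a b : {z : T // z < x} => (a : T) < (b : T)) ⟨u, hu⟩ ⟨v, hv⟩ with
    h' | h' | h'
  · exact le_of_lt h'
  · exact le_of_eq (congrArg Subtype.val h')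
  · exfalso
    have : treeHt hT v < treeHt hT u := by
      rw [treeHt_eq_typein hT hu, treeHt_eq_typein hT hv]
      exact (Ordinal.typein_lt_typein _).2 h'
    exact absurd h this.not_ge

lemma exists_pred_at {T : Type} [PartialOrder T] (hT : IsTreeOrder T) {x : T} {β : Ordinal}
    (h : β < treeHt hT x) : ∃ y, y < x ∧ treeHt hT y = β := by
  have := hT x
  obtain ⟨⟨y, hy⟩, hyβ⟩ := Ordinal.typein_surj _ h
  exact ⟨y, hy, (treeHt_eq_typein hT hy).trans hyβ⟩

/-- If `H ⊆ T_α` admits an injective regressive map into the union of the levels of one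
cofinal sequence in `α`, then it admits one for any other cofinal sequence. -/
theorem stmt_7 {T : Type} [PartialOrder T] (hT : IsTreeOrder T)
    (α : Ordinal) (hα : Order.IsSuccLimit α) (H : Set T) (hH : H ⊆ treeLevel hT α)
    (f f' : Ordinal → Ordinal) (hf : IsCofinalSeq α f) (hf' : IsCofinalSeq α f')
    (π : T → T) (hπreg : ∀ x ∈ H, π x < x)
    (hπmem : ∀ x ∈ H, ∃ ξ : Ordinal, ξ < α.cof.ord ∧ treeHt hT (π x) = f ξ)
    (hπinj : Set.InjOn π H) :
    ∃ π' : T → T, (∀ x ∈ H, π' x < x) ∧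
      (∀ x ∈ H, ∃ ξ : Ordinal, ξ < α.cof.ord ∧ treeHt hT (π' x) = f' ξ) ∧
      Set.InjOn π' H := by
  classical
  set κ := α.cof.ord with hκ
  have hκinf : Cardinal.aleph0 ≤ α.cof := Ordinal.aleph0_le_cof.2 hα
  set S : Ordinal → Set Ordinal := fun ξ => {ξ' | ξ' < κ ∧ f ξ ≤ f' ξ'} with hSdef
  have hS : ∀ ξ, ξ < κ → (S ξ).Nonempty := by
    intro ξ hξ
    obtain ⟨ξ', h1, h2⟩ := hf'.2.2 (f ξ) (hf.2.1 ξ hξ)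
    exact ⟨ξ', h1, h2⟩
  set h0 : Ordinal → Ordinal := fun ξ => sInf (S ξ) with hh0
  have h0mem : ∀ ξ, ξ < κ → h0 ξ ∈ S ξ := fun ξ hξ => csInf_mem (hS ξ hξ)
  have h0mono : ∀ ξ η, ξ ≤ η → η < κ → h0 ξ ≤ h0 η := by
    intro ξ η hle hη
    refine csInf_le_csInf (OrderBot.bddBelow _) (hS η hη) ?_
    intro ζ hζ
    rcases hle.lt_or_eq with h | rfl
    · exact ⟨hζ.1, (hf.1 ξ η h hη).le.trans hζ.2⟩
    · exact hζ
  set g : Ordinal → Ordinal := fun ξ => h0 ξ + ξ with hg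
  have g_lt : ∀ ξ, ξ < κ → g ξ < κ := by
    intro ξ hξ
    rw [hκ, Cardinal.lt_ord, Ordinal.card_add]
    exact Cardinal.add_lt_of_lt hκinf (Cardinal.lt_ord.1 ((h0mem ξ hξ).1))
      (Cardinal.lt_ord.1 hξ)
  have f'mono : ∀ a b, a ≤ b → b < κ → f' a ≤ f' b := by
    intro a b hab hb
    rcases hab.lt_or_eq with h | rfl
    · exact (hf'.1 a b h hb).le
    · exact le_rfl
  have g_mono : ∀ ξ η, ξ < η → η < κ → g ξ < g η := by
    intro ξ η h hη
    calc h0 ξ + ξ < h0 ξ + η := by exact add_lt_add_right h _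
    _ ≤ h0 η + η := add_le_add_left (h0mono ξ η h.le hη) _
  have f_le : ∀ ξ, ξ < κ → f ξ ≤ f' (g ξ) := by
    intro ξ hξ
    exact (h0mem ξ hξ).2.trans (f'mono _ _ (le_self_add) (g_lt ξ hξ))
  choose ξf hξflt hξfht using hπmem
  have hgood : ∀ x, ∀ hx : x ∈ H, ∃ y, y < x ∧ treeHt hT y = f' (g (ξf x hx)) := by
    intro x hx
    apply exists_pred_at hT
    have hx' : treeHt hT x = α := hH hx
    rw [hx']
    exact hf'.2.1 _ (g_lt _ (hξflt x hx))
  choose σ hσlt hσht using hgood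
  refine ⟨fun x => if hx : x ∈ H then σ x hx else x, ?_, ?_, ?_⟩
  · intro x hx; simp only [dif_pos hx]; exact hσlt x hx
  · intro x hx; simp only [dif_pos hx]
    exact ⟨g (ξf x hx), g_lt _ (hξflt x hx), hσht x hx⟩
  · intro x hx y hy hxy
    simp only [dif_pos hx, dif_pos hy] at hxy
    have h1 : f' (g (ξf x hx)) = f' (g (ξf y hy)) := by
      rw [← hσht x hx, ← hσht y hy, hxy]
    have hgx := g_lt _ (hξflt x hx)
    have hgy := g_lt _ (hξflt y hy)
    have h2 : g (ξf x hx) = g (ξf y hy) := by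
      rcases lt_trichotomy (g (ξf x hx)) (g (ξf y hy)) with h | h | h
      · exact absurd h1 (hf'.1 _ _ h hgy).ne
      · exact h
      · exact absurd h1.symm (hf'.1 _ _ h hgx).ne
    have h3 : ξf x hx = ξf y hy := by
      rcases lt_trichotomy (ξf x hx) (ξf y hy) with h | h | h
      · exact absurd h2 (g_mono _ _ h (hξflt y hy)).ne
      · exact h
      · exact absurd h2.symm (g_mono _ _ h (hξflt x hx)).ne
    have h4 : treeHt hT (π x) = treeHt hT (π y) := by
      rw [hξfht x hx, hξfht y hy, h3]
    have h5 : π x ≤ σ x hx := by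
      refine treeHt_le_of_le hT (hπreg x hx) (hσlt x hx) ?_
      rw [hξfht x hx, hσht x hx]
      exact f_le _ (hξflt x hx)
    have h6 : π y ≤ σ x hx := by
      rw [hxy]
      refine treeHt_le_of_le hT (hπreg y hy) (hσlt y hy) ?_
      rw [hξfht y hy, hσht y hy]
      exact f_le _ (hξflt y hy)
    exact hπinj hx hy (treeHt_inj_below hT h5 h6 h4)
end

section
/- Let T be an admissible partition tree of a compact linearly ord택ordered space K, and let s ⊆ T be totally ordered in the tree order. Then the set {min a : a ∈ s} is well-ordered in K and the set {max a : a ∈ s} is conversely well-ordered (well-ordered with respect to the reverse order of K). Moreover, if s is infinite of cardinality κ, then {min a : a ∈ s} or {max a : a ∈ s} has cardinality κ. -/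
open Set

/-- `T`, together with the interpretation map `I` assigning to each element of `T` a
subset of `K`, is an admissible partition tree of the compact linearly ordered space `K`. -/
structure IsAdmissiblePartitionTree (K : Type) [LinearOrder K] [TopologicalSpace K]
    (T : Type) [PartialOrder T] (I : T → Set K) : Prop where
  /-- The order on `T` is a tree order. -/
  tree : IsTreeOrder T
  /-- The tree order is reverse inclusion of the associated intervals. -/
  le_iff : ∀ a b : T, a ≤ b ↔ I b ⊆ I a
  /-- Every member is a closed subset of `K`. -/
  closed : ∀ a : T, IsClosed (I a)
  /-- Every member is an interval of `K`. -/
  interval : ∀ a : T, (I a).OrdConnected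
  /-- Every member is non-trivial, i.e. has at least two points. -/
  nontrivial : ∀ a : T, ∃ x y : K, x ∈ I a ∧ y ∈ I a ∧ x ≠ y
  /-- The zeroth level consists precisely of (the element representing) `K` itself. -/
  root : ∀ a : T, treeHt tree a = 0 ↔ I a = Set.univ
  /-- The zeroth level is nonempty. -/
  root_exists : ∃ a : T, I a = Set.univ
  /-- Two-element members have no immediate successors. -/
  two_elt : ∀ a : T, (∃ x y : K, x ≠ y ∧ I a = {x, y}) → ¬ ∃ b : T, a ⋖ b
  /-- A member with at least three elements has exactly two immediate successors,
  splitting it at an interior point. -/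
  three_elt : ∀ a : T,
    (∃ x y z : K, x ≠ y ∧ y ≠ z ∧ x ≠ z ∧ x ∈ I a ∧ y ∈ I a ∧ z ∈ I a) →
    ∃ b c : T, a ⋖ b ∧ a ⋖ c ∧ b ≠ c ∧ (∀ d : T, a ⋖ d → d = b ∨ d = c) ∧
      ∃ x y z : K, x < y ∧ y < z ∧
        IsLeast (I a) x ∧ IsLeast (I b) x ∧ IsGreatest (I b) y ∧
        IsLeast (I c) y ∧ IsGreatest (I c) z ∧ IsGreatest (I a) z
  /-- For limit `α`, the members of level `α` are exactly the intersections of members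
  chosen from each earlier level. -/
  limit_level : ∀ α : Ordinal, Order.IsSuccLimit α → ∀ a : T,
    (treeHt tree a = α ↔ ∃ g : Ordinal → T, (∀ ξ : Ordinal, ξ < α → treeHt tree (g ξ) = ξ) ∧
      I a = ⋂ ξ ∈ Set.Iio α, I (g ξ))

lemma no_desc_aux {T : Type} [PartialOrder T] (hwo : IsTreeOrder T)
    (a : ℕ → T) (hd : ∀ n, a (n + 1) < a n) : False := by
  have h0 : ∀ n, a (n + 1) < a 0 := by
    intro n
    induction n with
    | zero => exact hd 0
    | succ k ih => exact (hd (k + 1)).trans ih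
  have hwf : WellFounded (fun u v : {y : T // y < a 0} => (u : T) < (v : T)) :=
    (hwo (a 0)).toIsWellFounded.wf
  obtain ⟨m, hm, hmin⟩ := hwf.has_min (Set.range (fun n => (⟨a (n + 1), h0 n⟩ : {y : T // y < a 0})))
    ⟨⟨a 1, h0 0⟩, ⟨0, rfl⟩⟩
  obtain ⟨n, rfl⟩ := hm
  exact hmin ⟨a (n + 2), h0 (n + 1)⟩ ⟨n + 1, rfl⟩ (hd (n + 1))

lemma endpoint_inj_aux {K : Type} [LinearOrder K] [TopologicalSpace K]
    {T : Type} [PartialOrder T] {I : T → Set K}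
    (hT : IsAdmissiblePartitionTree K T I) {a b : T} (hab : a ≤ b) {x y : K}
    (hxa : IsLeast (I a) x) (hxb : IsLeast (I b) x)
    (hya : IsGreatest (I a) y) (hyb : IsGreatest (I b) y) : a = b := by
  refine le_antisymm hab ((hT.le_iff b a).2 ?_)
  intro z hz
  exact (hT.interval b).out hxb.1 hyb.1 ⟨hxa.2 hz, hya.2 hz⟩

/-- For a chain `s` in an admissible partition tree, the set of left endpoints is
well-ordered and the set of right endpoints is conversely well-ordered; moreover, if `s`
is infinite then one of these two sets has the same cardinality as `s`. -/
theorem stmt_15 {K : Type} [LinearOrder K] [TopologicalSpace K] [OrderTopology K]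
    [CompactSpace K] [Nontrivial K]
    {T : Type} [PartialOrder T] {I : T → Set K}
    (hT : IsAdmissiblePartitionTree K T I)
    (s : Set T) (hs : IsChain (· ≤ ·) s)
    (MinS MaxS : Set K)
    (hMin : MinS = {x : K | ∃ a ∈ s, IsLeast (I a) x})
    (hMax : MaxS = {x : K | ∃ a ∈ s, IsGreatest (I a) x}) :
    MinS.IsWF ∧ MaxS.WellFoundedOn (· > ·) ∧
      (s.Infinite → Cardinal.mk MinS = Cardinal.mk s ∨ Cardinal.mk MaxS = Cardinal.mk s) := by
  
  subst hMin hMax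
  refine ⟨?_, ?_, ?_⟩
  · rw [Set.isWF_iff_no_descending_seq]
    intro f hf hmem
    choose a ha hla using hmem
    apply no_desc_aux hT.tree a
    intro n
    have hne : a (n + 1) ≠ a n := by
      intro h
      have h1 := hla (n + 1)
      rw [h] at h1
      exact absurd (h1.unique (hla n)) (hf (Nat.lt_succ_self n)).ne
    rcases hs (ha n) (ha (n + 1)) (Ne.symm hne) with h | h
    · have hsub : I (a (n + 1)) ⊆ I (a n) := (hT.le_iff _ _).1 h
      exact absurd ((hla n).2 (hsub (hla (n + 1)).1))
        (not_le.2 (hf (Nat.lt_succ_self n)))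
    · exact lt_of_le_of_ne h hne
  · rw [Set.wellFoundedOn_iff_no_descending_seq]
    intro f hmem
    have hf : ∀ n : ℕ, f n < f (n + 1) := fun n => f.map_rel_iff.2 (Nat.lt_succ_self n)
    choose a ha hla using hmem
    apply no_desc_aux hT.tree a
    intro n
    have hne : a (n + 1) ≠ a n := by
      intro h
      have h1 := hla (n + 1)
      rw [h] at h1
      exact absurd (h1.unique (hla n)) (hf n).ne'
    rcases hs (ha n) (ha (n + 1)) (Ne.symm hne) with h | h
    · have hsub : I (a (n + 1)) ⊆ I (a n) := (hT.le_iff _ _).1 h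
      exact absurd ((hla n).2 (hsub (hla (n + 1)).1)) (not_le.2 (hf n))
    · exact lt_of_le_of_ne h hne
  · intro hinf
    classical
    haveI : Infinite s := Set.infinite_coe_iff.2 hinf
    have hk : Cardinal.aleph0 ≤ Cardinal.mk s := Cardinal.aleph0_le_mk s
    have hne : ∀ a : T, (I a).Nonempty := by
      intro a
      obtain ⟨x, y, hx, hy, _⟩ := hT.nontrivial a
      exact ⟨x, hx⟩
    have hmin_ex : ∀ a : T, ∃ x, IsLeast (I a) x := fun a =>
      ((hT.closed a).isCompact).exists_isLeast (hne a)
    have hmax_ex : ∀ a : T, ∃ x, IsGreatest (I a) x := fun a =>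
      ((hT.closed a).isCompact).exists_isGreatest (hne a)
    choose mn hmn using hmin_ex
    choose mx hmx using hmax_ex
    set A : Set K := {x : K | ∃ a ∈ s, IsLeast (I a) x} with hA
    set B : Set K := {x : K | ∃ a ∈ s, IsGreatest (I a) x} with hB
    have h1 : Cardinal.mk s ≤ Cardinal.mk A * Cardinal.mk B := by
      have hinj : Function.Injective
          (fun a : s => ((⟨mn a, a.1, a.2, hmn a⟩ : A), (⟨mx a, a.1, a.2, hmx a⟩ : B))) := by
        intro a b hab
        have h1' : mn (a : T) = mn (b : T) := congrArg (fun p => (p.1 : K)) hab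
        have h2' : mx (a : T) = mx (b : T) := congrArg (fun p => (p.2 : K)) hab
        apply Subtype.ext
        by_cases heq : (a : T) = (b : T)
        · exact heq
        · rcases hs a.2 b.2 heq with h | h
          · exact endpoint_inj_aux hT h (hmn _) (h1' ▸ hmn _) (hmx _) (h2' ▸ hmx _)
          · exact (endpoint_inj_aux hT h (hmn _) (h1'.symm ▸ hmn _)
              (hmx _) (h2'.symm ▸ hmx _)).symm
      have := Cardinal.mk_le_of_injective hinj
      rwa [Cardinal.mk_prod, Cardinal.lift_id, Cardinal.lift_id] at this
    have h2 : Cardinal.mk A ≤ Cardinal.mk s := by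
      have hinj : Function.Injective (fun x : A => (⟨x.2.choose, x.2.choose_spec.1⟩ : s)) := by
        intro x y h
        have hx := x.2.choose_spec.2
        have hy := y.2.choose_spec.2
        have heq : x.2.choose = y.2.choose := congrArg Subtype.val h
        rw [heq] at hx
        exact Subtype.ext (hx.unique hy)
      exact Cardinal.mk_le_of_injective hinj
    have h3 : Cardinal.mk B ≤ Cardinal.mk s := by
      have hinj : Function.Injective (fun x : B => (⟨x.2.choose, x.2.choose_spec.1⟩ : s)) := by
        intro x y h
        have hx := x.2.choose_spec.2
        have hy := y.2.choose_spec.2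
        have heq : x.2.choose = y.2.choose := congrArg Subtype.val h
        rw [heq] at hx
        exact Subtype.ext (hx.unique hy)
      exact Cardinal.mk_le_of_injective hinj
    rcases le_total (Cardinal.mk A) (Cardinal.mk B) with h | h
    · right
      refine le_antisymm h3 ?_
      have hν : Cardinal.aleph0 ≤ Cardinal.mk B := by
        by_contra hlt
        push_neg at hlt
        have : Cardinal.mk A * Cardinal.mk B < Cardinal.aleph0 :=
          Cardinal.mul_lt_aleph0 (h.trans_lt hlt) hlt
        exact absurd (hk.trans h1) (not_le.2 this)
      calc Cardinal.mk s ≤ Cardinal.mk A * Cardinal.mk B := h1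
        _ ≤ Cardinal.mk B * Cardinal.mk B := mul_le_mul_left h _
        _ = Cardinal.mk B := Cardinal.mul_eq_self hν
    · left
      refine le_antisymm h2 ?_
      have hν : Cardinal.aleph0 ≤ Cardinal.mk A := by
        by_contra hlt
        push_neg at hlt
        have : Cardinal.mk A * Cardinal.mk B < Cardinal.aleph0 :=
          Cardinal.mul_lt_aleph0 hlt (h.trans_lt hlt)
        exact absurd (hk.trans h1) (not_le.2 this)
      calc Cardinal.mk s ≤ Cardinal.mk A * Cardinal.mk B := h1
        _ ≤ Cardinal.mk A * Cardinal.mk A := mul_le_mul_right h _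
        _ = Cardinal.mk A := Cardinal.mul_eq_self hν
end

section
/- Let T be an admissible partition tree of a compact linearly ordered space K, let α be a limit ordinal of cofinality κ with cofinal sequence (α_ξ)_{ξ<κ}, and let H ⊆ T_α. Then there exists a regressive map π : H → ⋃_{ξ<κ} T_{α_ξ} with the property that for every w ∈ ⋃_{ξ<κ} T_{α_ξ} with π^{-1}(w) nonempty, there exists b ∈ H such that min a ≤ min b for all a ∈ π^{-1}(w). -/
open Set

section MyAux


variable {T : Type} [PartialOrder T]

lemma myaux_ht_eq_typein (hT : IsTreeOrder T) {a z : T} (h : z < a) :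
    treeHt hT z = @Ordinal.typein {y : T // y < a} (fun p q => (p : T) < (q : T)) (hT a) ⟨z, h⟩ := by
  letI := hT a
  letI := hT z
  rw [show (@Ordinal.typein {y : T // y < a} (fun p q => (p : T) < (q : T)) (hT a) ⟨z, h⟩ : Ordinal)
      = Ordinal.type (Subrel (fun p q : {y : T // y < a} => (p : T) < (q : T))
        (fun b : {y : T // y < a} => (b : T) < z)) from (Ordinal.type_subrel _ _).symm]
  refine Ordinal.type_eq.2 ⟨?_⟩
  exact {
    toFun := fun w => ⟨⟨w.1, lt_trans w.2 h⟩, w.2⟩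
    invFun := fun b => ⟨b.1.1, b.2⟩
    left_inv := fun w => rfl
    right_inv := fun b => rfl
    map_rel_iff' := Iff.rfl }

lemma myaux_ht_lt (hT : IsTreeOrder T) {a z : T} (h : z < a) :
    treeHt hT z < treeHt hT a := by
  letI := hT a
  rw [myaux_ht_eq_typein hT h]
  exact Ordinal.typein_lt_type _ _

lemma myaux_exists_pred (hT : IsTreeOrder T) {a : T} {ξ : Ordinal}
    (h : ξ < treeHt hT a) : ∃ z : T, z < a ∧ treeHt hT z = ξ := by
  letI := hT a
  refine ⟨(Ordinal.enum (fun p q : {y : T // y < a} => (p : T) < (q : T)) ⟨ξ, h⟩ : {y : T // y < a}).1,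
    (Ordinal.enum _ ⟨ξ, h⟩ : {y : T // y < a}).2, ?_⟩
  rw [myaux_ht_eq_typein hT (Ordinal.enum _ ⟨ξ, h⟩ : {y : T // y < a}).2]
  convert Ordinal.typein_enum (fun p q : {y : T // y < a} => (p : T) < (q : T)) h

lemma myaux_pred_unique (hT : IsTreeOrder T) {a z z' : T} (hz : z < a) (hz' : z' < a)
    (e : treeHt hT z = treeHt hT z') : z = z' := by
  letI := hT a
  rw [myaux_ht_eq_typein hT hz, myaux_ht_eq_typein hT hz'] at e
  have := Ordinal.typein_injective _ e
  exact congrArg Subtype.val this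

lemma myaux_pred_lt (hT : IsTreeOrder T) {a z z' : T} (hz : z < a) (hz' : z' < a)
    (e : treeHt hT z < treeHt hT z') : z < z' := by
  letI := hT a
  rcases @trichotomous _ (fun p q : {y : T // y < a} => (p : T) < (q : T)) _ ⟨z, hz⟩ ⟨z', hz'⟩ with
    h | h | h
  · exact h
  · exact absurd (congrArg (treeHt hT) (congrArg Subtype.val h)) e.ne
  · exact absurd (myaux_ht_lt hT (show z' < z from h)) (by exact not_lt.2 e.le)

lemma myaux_pred_le (hT : IsTreeOrder T) {a z z' : T} (hz : z < a) (hz' : z' < a)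
    (e : treeHt hT z ≤ treeHt hT z') : z ≤ z' := by
  rcases e.lt_or_eq with h | h
  · exact (myaux_pred_lt hT hz hz' h).le
  · exact (myaux_pred_unique hT hz hz' h).le


variable {K : Type} [LinearOrder K] [TopologicalSpace K] {I : T → Set K}

lemma myaux_inj (hA : IsAdmissiblePartitionTree K T I) {a b : T} (h : I a = I b) : a = b :=
  le_antisymm ((hA.le_iff a b).2 h.ge) ((hA.le_iff b a).2 h.le)

lemma myaux_limit_le (hA : IsAdmissiblePartitionTree K T I) {γ : Ordinal} (hγ : Order.IsSuccLimit γ)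
    {z1 z2 : T} (h1 : treeHt hA.tree z1 = γ) (h : ∀ w : T, w < z1 → w < z2) : z1 ≤ z2 := by
  obtain ⟨g, hg, hIg⟩ := (hA.limit_level γ hγ z1).1 h1
  have hglt : ∀ ξ : Ordinal, ξ < γ → g ξ < z1 := by
    intro ξ hξ
    have hle : g ξ ≤ z1 := (hA.le_iff _ _).2 (by rw [hIg]; exact Set.biInter_subset_of_mem hξ)
    rcases hle.lt_or_eq with h' | h'
    · exact h'
    · exact absurd (h' ▸ hg ξ hξ) (by rw [h1]; exact hξ.ne')
  refine (hA.le_iff _ _).2 ?_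
  rw [hIg]
  exact Set.subset_iInter₂ fun ξ hξ => (hA.le_iff _ _).1 (h _ (hglt ξ hξ)).le

lemma myaux_le_of_forall_pred (hA : IsAdmissiblePartitionTree K T I) {γ : Ordinal}
    (hγ : Order.IsSuccLimit γ) {a r : T} (ha : treeHt hA.tree a = γ) (h : ∀ z : T, z < a → z ≤ r) :
    a ≤ r := by
  obtain ⟨g, hg, hIg⟩ := (hA.limit_level γ hγ a).1 ha
  have hglt : ∀ ξ : Ordinal, ξ < γ → g ξ < a := by
    intro ξ hξ
    have hle : g ξ ≤ a := (hA.le_iff _ _).2 (by rw [hIg]; exact Set.biInter_subset_of_mem hξ)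
    rcases hle.lt_or_eq with h' | h'
    · exact h'
    · exact absurd (h' ▸ hg ξ hξ) (by rw [ha]; exact hξ.ne')
  refine (hA.le_iff _ _).2 ?_
  rw [hIg]
  exact Set.subset_iInter₂ fun ξ hξ => (hA.le_iff _ _).1 (h _ (hglt ξ hξ))

lemma myaux_sep (hA : IsAdmissiblePartitionTree K T I) {u v : T}
    (huv : ¬ u ≤ v) (hvu : ¬ v ≤ u) :
    (∀ x ∈ I u, ∀ y ∈ I v, x ≤ y) ∨ (∀ x ∈ I v, ∀ y ∈ I u, x ≤ y) := by
  classical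
  set Q : Ordinal → Prop := fun ξ => ξ < (treeHt hA.tree) u ∧ ξ < (treeHt hA.tree) v ∧
    ∀ z1 z2 : T, z1 < u → z2 < v → (treeHt hA.tree) z1 = ξ → (treeHt hA.tree) z2 = ξ → z1 = z2 with hQ
  have hQ0 : Q 0 := by
    refine ⟨?_, ?_, ?_⟩
    · rw [pos_iff_ne_zero]
      intro h0
      exact huv ((hA.le_iff _ _).2 (by rw [(hA.root u).1 h0]; exact Set.subset_univ _))
    · rw [pos_iff_ne_zero]
      intro h0
      exact hvu ((hA.le_iff _ _).2 (by rw [(hA.root v).1 h0]; exact Set.subset_univ _))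
    · intro z1 z2 _ _ e1 e2
      exact myaux_inj hA (((hA.root z1).1 e1).trans ((hA.root z2).1 e2).symm)
  have hQex : ∃ ξ, ¬ Q ξ := ⟨(treeHt hA.tree) u, fun h => lt_irrefl _ h.1⟩
  set γ := Ordinal.lt_wf.min {ξ | ¬ Q ξ} hQex with hγdef
  have hγQ : ¬ Q γ := Ordinal.lt_wf.min_mem {ξ | ¬ Q ξ} hQex
  have hmin : ∀ ξ, ξ < γ → Q ξ := by
    intro ξ hξ
    by_contra hn
    exact Ordinal.lt_wf.not_lt_min {ξ | ¬ Q ξ} hn hξ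
  have hγu : γ ≤ (treeHt hA.tree) u := by
    by_contra hlt
    exact lt_irrefl _ (hmin _ (not_le.1 hlt)).1
  have hγv : γ ≤ (treeHt hA.tree) v := by
    by_contra hlt
    exact lt_irrefl _ (hmin _ (not_le.1 hlt)).2.1
  have hu'ex : ∃ u' : T, u' ≤ u ∧ (treeHt hA.tree) u' = γ := by
    rcases hγu.lt_or_eq with h | h
    · obtain ⟨z, hz, hze⟩ := myaux_exists_pred hA.tree h
      exact ⟨z, hz.le, hze⟩
    · exact ⟨u, le_rfl, h.symm⟩
  have hv'ex : ∃ v' : T, v' ≤ v ∧ (treeHt hA.tree) v' = γ := by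
    rcases hγv.lt_or_eq with h | h
    · obtain ⟨z, hz, hze⟩ := myaux_exists_pred hA.tree h
      exact ⟨z, hz.le, hze⟩
    · exact ⟨v, le_rfl, h.symm⟩
  obtain ⟨u', hu'le, hu'ht⟩ := hu'ex
  obtain ⟨v', hv'le, hv'ht⟩ := hv'ex
  have hu'pos : u' = u ∨ u' < u := (eq_or_lt_of_le hu'le).imp id id
  have hv'pos : v' = v ∨ v' < v := (eq_or_lt_of_le hv'le).imp id id
  have hne : u' ≠ v' := by
    intro he
    rcases hu'pos with hu1 | hu1 <;> rcases hv'pos with hv1 | hv1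
    · exact huv (le_of_eq (hu1 ▸ hv1 ▸ he))
    · exact huv (le_of_lt (by rw [← hu1, he]; exact hv1))
    · exact hvu (le_of_lt (by rw [← hv1, ← he]; exact hu1))
    · refine hγQ ⟨?_, ?_, ?_⟩
      · rw [← hu'ht]; exact myaux_ht_lt hA.tree hu1
      · rw [← hv'ht]; exact myaux_ht_lt hA.tree hv1
      · intro z1 z2 hz1 hz2 e1 e2
        have e1' : z1 = u' := myaux_pred_unique hA.tree hz1 hu1 (e1.trans hu'ht.symm)
        have e2' : z2 = v' := myaux_pred_unique hA.tree hz2 hv1 (e2.trans hv'ht.symm)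
        rw [e1', e2', he]
  have hγ0 : γ ≠ 0 := fun h => hγQ (h ▸ hQ0)
  rcases Ordinal.zero_or_succ_or_isSuccLimit γ with h0 | ⟨δ, hδ⟩ | hlim
  · exact absurd h0 hγ0
  · -- successor case
    have hδγ : δ < γ := hδ ▸ Order.lt_succ δ
    obtain ⟨hδu, hδv, hδuniq⟩ := hmin δ hδγ
    obtain ⟨c, hcu, hcht⟩ := myaux_exists_pred hA.tree (show δ < (treeHt hA.tree) u from hδu)
    have hcv : c < v := by
      obtain ⟨z2, hz2, hz2e⟩ := myaux_exists_pred hA.tree (show δ < (treeHt hA.tree) v from hδv)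
      have : c = z2 := hδuniq c z2 hcu hz2 hcht hz2e
      rw [this]; exact hz2
    have hcu' : c < u' := by
      rcases hu'pos with h | h
      · rw [h]; exact hcu
      · exact myaux_pred_lt hA.tree hcu h (show (treeHt hA.tree) c < (treeHt hA.tree) u' by rw [hcht, hu'ht]; exact hδγ)
    have hcv' : c < v' := by
      rcases hv'pos with h | h
      · rw [h]; exact hcv
      · exact myaux_pred_lt hA.tree hcv h (show (treeHt hA.tree) c < (treeHt hA.tree) v' by rw [hcht, hv'ht]; exact hδγ)
    have hcov_u : c ⋖ u' := by
      refine ⟨hcu', fun m hcm hmu' => ?_⟩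
      have h1 : (treeHt hA.tree) m < γ := by rw [← hu'ht]; exact myaux_ht_lt hA.tree hmu'
      have h2 : δ < (treeHt hA.tree) m := by rw [← hcht]; exact myaux_ht_lt hA.tree hcm
      rw [← hδ] at h1
      exact absurd (Order.lt_succ_iff.1 h1) (not_le.2 h2)
    have hcov_v : c ⋖ v' := by
      refine ⟨hcv', fun m hcm hmv' => ?_⟩
      have h1 : (treeHt hA.tree) m < γ := by rw [← hv'ht]; exact myaux_ht_lt hA.tree hmv'
      have h2 : δ < (treeHt hA.tree) m := by rw [← hcht]; exact myaux_ht_lt hA.tree hcm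
      rw [← hδ] at h1
      exact absurd (Order.lt_succ_iff.1 h1) (not_le.2 h2)
    -- I c has at least three points
    obtain ⟨x, y, hx, hy, hxy⟩ := hA.nontrivial c
    have h3 : ∃ z ∈ I c, z ≠ x ∧ z ≠ y := by
      by_contra hno
      push_neg at hno
      refine hA.two_elt c ⟨x, y, hxy, ?_⟩ ⟨u', hcov_u⟩
      ext w
      constructor
      · intro hw
        by_cases h1 : w = x
        · exact Or.inl h1
        · exact Or.inr (hno w hw h1)
      · rintro (rfl | rfl) <;> assumption
    obtain ⟨z, hz, hzx, hzy⟩ := h3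
    obtain ⟨b, c2, _, _, _, hall, x', y', z', hx'y', hy'z', _, _, hGb, hLc2, _, _⟩ :=
      hA.three_elt c ⟨x, z, y, fun h => hzx h.symm, hzy, hxy, hx, hz, hy⟩
    have hU : I u ⊆ I u' := (hA.le_iff _ _).1 hu'le
    have hV : I v ⊆ I v' := (hA.le_iff _ _).1 hv'le
    rcases hall u' hcov_u with h1 | h1 <;> rcases hall v' hcov_v with h2 | h2
    · exact absurd (h1.trans h2.symm) hne
    · left
      intro p hp q hq
      have hp' : p ∈ I b := by rw [← h1]; exact hU hp
      have hq' : q ∈ I c2 := by rw [← h2]; exact hV hq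
      exact le_trans (hGb.2 hp') (hLc2.2 hq')
    · right
      intro q hq p hp
      have hq' : q ∈ I b := by rw [← h2]; exact hV hq
      have hp' : p ∈ I c2 := by rw [← h1]; exact hU hp
      exact le_trans (hGb.2 hq') (hLc2.2 hp')
    · exact absurd (h1.trans h2.symm) hne
  · -- limit case: contradiction
    exfalso
    have hstep : ∀ w : T, w < u' → w < v' := by
      intro w hw
      have hwu : w < u := lt_of_lt_of_le hw hu'le
      have hξγ : (treeHt hA.tree) w < γ := by rw [← hu'ht]; exact myaux_ht_lt hA.tree hw
      obtain ⟨hq1, hq2, hq3⟩ := hmin _ hξγ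
      obtain ⟨z2, hz2, hz2e⟩ := myaux_exists_pred hA.tree (show (treeHt hA.tree) w < (treeHt hA.tree) v from hq2)
      have hwz : w = z2 := hq3 w z2 hwu hz2 rfl hz2e
      have hwv : w < v := hwz ▸ hz2
      rcases hv'pos with h | h
      · rw [h]; exact hwv
      · exact myaux_pred_lt hA.tree hwv h (show (treeHt hA.tree) w < (treeHt hA.tree) v' by rw [hv'ht]; exact hξγ)
    have hstep' : ∀ w : T, w < v' → w < u' := by
      intro w hw
      have hwv : w < v := lt_of_lt_of_le hw hv'le
      have hξγ : (treeHt hA.tree) w < γ := by rw [← hv'ht]; exact myaux_ht_lt hA.tree hw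
      obtain ⟨hq1, hq2, hq3⟩ := hmin _ hξγ
      obtain ⟨z1, hz1, hz1e⟩ := myaux_exists_pred hA.tree (show (treeHt hA.tree) w < (treeHt hA.tree) u from hq1)
      have hwz : z1 = w := hq3 z1 w hz1 hwv hz1e rfl
      have hwu : w < u := hwz ▸ hz1
      rcases hu'pos with h | h
      · rw [h]; exact hwu
      · exact myaux_pred_lt hA.tree hwu h (show (treeHt hA.tree) w < (treeHt hA.tree) u' by rw [hu'ht]; exact hξγ)
    exact hne (le_antisymm (myaux_limit_le hA hlim hu'ht hstep)
      (myaux_limit_le hA hlim hv'ht hstep'))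

end MyAux

/-- Given `H ⊆ T_α` (`α` limit) in an admissible partition tree, there is a regressive map
`π : H → ⋃_{ξ<κ} T_{α_ξ}` such that each nonempty fibre `π⁻¹(w)` has its set of left
endpoints bounded above by the left endpoint of some member of `H`. -/
theorem stmt_16 {K : Type} [LinearOrder K] [TopologicalSpace K] [OrderTopology K]
    [CompactSpace K] [Nontrivial K]
    {T : Type} [PartialOrder T] {I : T → Set K}
    (hT : IsAdmissiblePartitionTree K T I)
    (α : Ordinal) (hα : Order.IsSuccLimit α)
    (f : Ordinal → Ordinal) (hf : IsCofinalSeq α f)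
    (H : Set T) (hH : H ⊆ treeLevel hT.tree α) :
    ∃ π : T → T,
      (∀ a ∈ H, π a < a ∧ ∃ ξ : Ordinal, ξ < α.cof.ord ∧ treeHt hT.tree (π a) = f ξ) ∧
      ∀ w : T, ({a ∈ H | π a = w}).Nonempty →
        ∃ b ∈ H, ∀ a ∈ H, π a = w →
          ∀ x y : K, IsLeast (I a) x → IsLeast (I b) y → x ≤ y := by
  classical
  have hcpos : (0 : Ordinal) < α.cof.ord := by
    rw [pos_iff_ne_zero]
    intro h
    exact hα.ne_zero (Ordinal.cof_eq_zero.1 (Cardinal.ord_eq_zero.1 h))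
  have hf0 : f 0 < α := hf.2.1 0 hcpos
  have key : ∀ a : T, ∃ wr : T × T, a ∈ H →
      (wr.1 < a ∧ (∃ ξ : Ordinal, ξ < α.cof.ord ∧ treeHt hT.tree wr.1 = f ξ) ∧
        ((wr.2 ∈ H ∧ ¬ (wr.1 ≤ wr.2) ∧ ∀ x ∈ I a, ∀ y ∈ I wr.2, x ≤ y) ∨
         (∀ a' ∈ H, wr.1 ≤ a' → a' = a ∨ ∀ x ∈ I a', ∀ y ∈ I a, x ≤ y))) := by
    intro a
    by_cases haH : a ∈ H
    swap
    · exact ⟨(a, a), fun h => absurd h haH⟩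
    have hta : treeHt hT.tree a = α := hH haH
    obtain ⟨w₀, hw₀a, hw₀ht⟩ := myaux_exists_pred hT.tree
      (show f 0 < treeHt hT.tree a by rw [hta]; exact hf0)
    by_cases hext : ∃ r, r ∈ H ∧ w₀ ≤ r ∧ r ≠ a ∧ ∀ x ∈ I a, ∀ y ∈ I r, x ≤ y
    · obtain ⟨r, hrH, _, hra, hlr⟩ := hext
      have hfind : ∃ η, η < α.cof.ord ∧ ∃ z, z < a ∧ treeHt hT.tree z = f η ∧ ¬ z ≤ r := by
        by_contra hcon
        push_neg at hcon
        have hall : ∀ z : T, z < a → z ≤ r := by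
          intro z hz
          have hξα : treeHt hT.tree z < α := by rw [← hta]; exact myaux_ht_lt hT.tree hz
          obtain ⟨η, hηc, hle⟩ := hf.2.2 _ hξα
          have hfη : f η < α := hf.2.1 η hηc
          obtain ⟨p, hpa, hpht⟩ := myaux_exists_pred hT.tree
            (show f η < treeHt hT.tree a by rw [hta]; exact hfη)
          have h1 : z ≤ p := myaux_pred_le hT.tree hz hpa (by rw [hpht]; exact hle)
          exact h1.trans (hcon η hηc p hpa hpht)
        have hle : a ≤ r := myaux_le_of_forall_pred hT hα hta hall
        have hlt : a < r := lt_of_le_of_ne hle (Ne.symm hra)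
        have h2 := myaux_ht_lt hT.tree hlt
        rw [hta, hH hrH] at h2
        exact lt_irrefl _ h2
      obtain ⟨η, hηc, z, hza, hzht, hzr⟩ := hfind
      exact ⟨(z, r), fun _ => ⟨hza, ⟨η, hηc, hzht⟩, Or.inl ⟨hrH, hzr, hlr⟩⟩⟩
    · refine ⟨(w₀, a), fun _ => ⟨hw₀a, ⟨0, hcpos, hw₀ht⟩, Or.inr ?_⟩⟩
      intro a' ha'H hw₀a'
      by_cases h' : a' = a
      · exact Or.inl h'
      · have h1 : ¬ a ≤ a' := by
          intro hle
          have hlt : a < a' := lt_of_le_of_ne hle (fun h => h' h.symm)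
          have h2 := myaux_ht_lt hT.tree hlt
          rw [hta, hH ha'H] at h2
          exact lt_irrefl _ h2
        have h2 : ¬ a' ≤ a := by
          intro hle
          have hlt : a' < a := lt_of_le_of_ne hle h'
          have h3 := myaux_ht_lt hT.tree hlt
          rw [hta, hH ha'H] at h3
          exact lt_irrefl _ h3
        rcases myaux_sep hT h1 h2 with hsep | hsep
        · exact absurd ⟨a', ha'H, hw₀a', h', hsep⟩ hext
        · exact Or.inr hsep
  choose g hg using key
  refine ⟨fun a => (g a).1, fun a ha => ⟨(hg a ha).1, (hg a ha).2.1⟩, ?_⟩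
  intro w hne
  obtain ⟨a₀, ha₀H, ha₀w⟩ := hne
  by_cases hc : ∃ a, a ∈ H ∧ (g a).1 = w ∧ (g a).2 ∈ H ∧ ¬ ((g a).1 ≤ (g a).2) ∧
      ∀ x ∈ I a, ∀ y ∈ I (g a).2, x ≤ y
  · obtain ⟨a, haH, haw, hrH, hnle, hlr⟩ := hc
    refine ⟨(g a).2, hrH, ?_⟩
    intro a'' ha''H ha''w x y hx hy
    have hwa'' : w < a'' := ha''w ▸ (hg a'' ha''H).1
    have hwa : w < a := haw ▸ (hg a haH).1
    have hnle' : ¬ (w ≤ (g a).2) := haw ▸ hnle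
    have hble : ¬ ((g a).2 ≤ w) := by
      intro hle
      have hlt : (g a).2 < a := lt_of_le_of_lt hle hwa
      have h3 := myaux_ht_lt hT.tree hlt
      rw [hH hrH, hH haH] at h3
      exact lt_irrefl _ h3
    rcases myaux_sep hT hnle' hble with hsep | hsep
    · exact hsep x ((hT.le_iff w a'').1 hwa''.le hx.1) y hy.1
    · exfalso
      obtain ⟨x₁, y₁, hx₁, hy₁, hxy₁⟩ := hT.nontrivial a
      obtain ⟨q, _, hq, _, _⟩ := hT.nontrivial (g a).2
      have hx₁w : x₁ ∈ I w := (hT.le_iff w a).1 hwa.le hx₁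
      have hy₁w : y₁ ∈ I w := (hT.le_iff w a).1 hwa.le hy₁
      have e1 : x₁ = q := le_antisymm (hlr x₁ hx₁ q hq) (hsep q hq x₁ hx₁w)
      have e2 : y₁ = q := le_antisymm (hlr y₁ hy₁ q hq) (hsep q hq y₁ hy₁w)
      exact hxy₁ (e1.trans e2.symm)
  · rcases (hg a₀ ha₀H).2.2 with hl | hr
    · exact absurd ⟨a₀, ha₀H, ha₀w, hl.1, hl.2.1, hl.2.2⟩ hc
    · refine ⟨a₀, ha₀H, ?_⟩
      intro a'' ha''H ha''w x y hx hy
      have hwa'' : w < a'' := ha''w ▸ (hg a'' ha''H).1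
      have hle : (g a₀).1 ≤ a'' := by
        have : (g a₀).1 = w := ha₀w
        rw [this]
        exact hwa''.le
      rcases hr a'' ha''H hle with he | hsep
      · exact hx.2 (by rw [he]; exact hy.1)
      · exact hsep x hx.1 y hy.1
end
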